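/- Let n ≥ 2 and let A₁, …, A_{2n} be points in ℝ^m, with G₁ the centroid of the odd-indexed points and G₂ the centroid of the even-indexed points. Then ∑_{i=1}^{2n} |A_i A_{i+1}|² = ∑_{1≤i<j≤2n, 1<j−i<2n−1} (−1)^{j−i} |A_i A_j|² holds if and only if G₁ = G₂. -/
import Mathlib

open Finset RealInnerProductSpace

lemma sum_neg_one_pow_Icc' (n : ℕ) :
    ∑ i ∈ Finset.Icc 1 (2 * n), (-1 : ℝ) ^ i = 0 := by
  induction n with
  | zero => simp
  | succ k ih =>
    rw [show 2 * (k + 1) = (2 * k + 1) + 1 by ring,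
        Finset.sum_Icc_succ_top (by omega), Finset.sum_Icc_succ_top (by omega), ih]
    have e1 : (-1 : ℝ) ^ (2 * k + 1) = -1 := Odd.neg_one_pow ⟨k, by ring⟩
    have e2 : (-1 : ℝ) ^ (2 * k + 1 + 1) = 1 := Even.neg_one_pow ⟨k + 1, by ring⟩
    rw [e1, e2]; ring

lemma sum_neg_one_smul_Icc' {V : Type*} [AddCommGroup V] [Module ℝ V]
    (A : ℕ → V) (n : ℕ) :
    ∑ i ∈ Finset.Icc 1 (2 * n), (-1 : ℝ) ^ i • A i =
      (∑ k ∈ Finset.range n, A (2 * k + 2)) - ∑ k ∈ Finset.range n, A (2 * k + 1) := by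
  induction n with
  | zero => simp
  | succ k ih =>
    rw [show 2 * (k + 1) = (2 * k + 1) + 1 by ring,
        Finset.sum_Icc_succ_top (by omega), Finset.sum_Icc_succ_top (by omega), ih,
        Finset.sum_range_succ, Finset.sum_range_succ]
    have e1 : (-1 : ℝ) ^ (2 * k + 1) = -1 := Odd.neg_one_pow ⟨k, by ring⟩
    have e2 : (-1 : ℝ) ^ (2 * k + 1 + 1) = 1 := Even.neg_one_pow ⟨k + 1, by ring⟩
    rw [e1, e2, neg_one_smul, one_smul]
    have : A (2 * k + 1 + 1) = A (2 * k + 2) := by norm_num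
    rw [this]; abel

theorem generalized_parallelogram_iff (m n : ℕ) (hn : 2 ≤ n)
    (A : ℕ → EuclideanSpace ℝ (Fin m)) (hcyc : A (2 * n + 1) = A 1) :
    (∑ i ∈ Finset.Icc 1 (2 * n), dist (A i) (A (i + 1)) ^ 2 =
      ∑ i ∈ Finset.Icc 1 (2 * n), ∑ j ∈ Finset.Icc 1 (2 * n),
        if i < j ∧ 1 < j - i ∧ j - i < 2 * n - 1 then
          (-1 : ℝ) ^ (j - i) * dist (A i) (A j) ^ 2 else 0) ↔
      (n : ℝ)⁻¹ • ∑ k ∈ Finset.range n, A (2 * k + 1) =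
        (n : ℝ)⁻¹ • ∑ k ∈ Finset.range n, A (2 * k + 2) := by
  classical
  set s : Finset ℕ := Finset.Icc 1 (2 * n) with hs
  set D : EuclideanSpace ℝ (Fin m) := ∑ i ∈ s, (-1 : ℝ) ^ i • A i with hD
  set F : ℕ → ℕ → ℝ := fun i j => (-1 : ℝ) ^ (i + j) * dist (A i) (A j) ^ 2 with hF
  have hc0 : ∑ i ∈ s, (-1 : ℝ) ^ i = 0 := sum_neg_one_pow_Icc' n
  -- full symmetric sum
  have hT : ∑ i ∈ s, ∑ j ∈ s, F i j = -2 * ‖D‖ ^ 2 := by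
    have expand : ∀ i ∈ s, ∀ j ∈ s, F i j =
        ((-1 : ℝ) ^ i * ‖A i‖ ^ 2) * (-1 : ℝ) ^ j
          + (-1 : ℝ) ^ i * ((-1 : ℝ) ^ j * ‖A j‖ ^ 2)
          - 2 * ⟪(-1 : ℝ) ^ i • A i, (-1 : ℝ) ^ j • A j⟫ := by
      intro i _ j _
      simp only [hF]
      rw [dist_eq_norm, pow_add, real_inner_smul_left, real_inner_smul_right,
        @norm_sub_sq_real]
      ring
    calc ∑ i ∈ s, ∑ j ∈ s, F i j
        = ∑ i ∈ s, ∑ j ∈ s, (((-1 : ℝ) ^ i * ‖A i‖ ^ 2) * (-1 : ℝ) ^ j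
            + (-1 : ℝ) ^ i * ((-1 : ℝ) ^ j * ‖A j‖ ^ 2)
            - 2 * ⟪(-1 : ℝ) ^ i • A i, (-1 : ℝ) ^ j • A j⟫) :=
          Finset.sum_congr rfl fun i hi => Finset.sum_congr rfl fun j hj => expand i hi j hj
      _ = (∑ i ∈ s, (-1 : ℝ) ^ i * ‖A i‖ ^ 2) * (∑ j ∈ s, (-1 : ℝ) ^ j)
            + (∑ i ∈ s, (-1 : ℝ) ^ i) * (∑ j ∈ s, (-1 : ℝ) ^ j * ‖A j‖ ^ 2)
            - 2 * ⟪D, D⟫ := by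
          rw [hD, sum_inner]
          simp only [inner_sum]
          rw [Finset.sum_mul_sum, Finset.sum_mul_sum, Finset.mul_sum]
          rw [← Finset.sum_add_distrib, ← Finset.sum_sub_distrib]
          refine Finset.sum_congr rfl fun i hi => ?_
          rw [Finset.mul_sum, ← Finset.sum_add_distrib, ← Finset.sum_sub_distrib]
      _ = -2 * ‖D‖ ^ 2 := by
          rw [hc0, real_inner_self_eq_norm_sq]; ring
  have hsym : ∀ i j, F j i = F i j := by
    intro i j; simp only [hF]; rw [add_comm j i, dist_comm]
  have hdiag : ∀ i, F i i = 0 := by intro i; simp [hF]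
  -- trichotomy: T = 2 * S1
  have htri : ∑ i ∈ s, ∑ j ∈ s, F i j
      = 2 * ∑ i ∈ s, ∑ j ∈ s, (if i < j then F i j else 0) := by
    have point : ∀ i j, F i j = (if i < j then F i j else 0)
        + (if j < i then F i j else 0) + (if i = j then F i j else 0) := by
      intro i j
      rcases lt_trichotomy i j with h | h | h
      · simp [h, h.ne, not_lt.mpr h.le]
      · simp [h, lt_irrefl]
      · simp [h, h.ne', not_lt.mpr h.le]
    have hgt : ∑ i ∈ s, ∑ j ∈ s, (if j < i then F i j else 0)
        = ∑ i ∈ s, ∑ j ∈ s, (if i < j then F i j else 0) := by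
      rw [Finset.sum_comm]
      exact Finset.sum_congr rfl fun i _ => Finset.sum_congr rfl fun j _ => by rw [hsym]
    have hdg : ∑ i ∈ s, ∑ j ∈ s, (if i = j then F i j else 0) = 0 := by
      refine Finset.sum_eq_zero fun i hi => ?_
      rw [Finset.sum_ite_eq s i (F i), if_pos hi, hdiag]
    calc ∑ i ∈ s, ∑ j ∈ s, F i j
        = ∑ i ∈ s, ∑ j ∈ s, ((if i < j then F i j else 0)
            + (if j < i then F i j else 0) + (if i = j then F i j else 0)) :=
          Finset.sum_congr rfl fun i _ => Finset.sum_congr rfl fun j _ => point i j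
      _ = (∑ i ∈ s, ∑ j ∈ s, (if i < j then F i j else 0))
            + (∑ i ∈ s, ∑ j ∈ s, (if j < i then F i j else 0))
            + (∑ i ∈ s, ∑ j ∈ s, (if i = j then F i j else 0)) := by
          simp [Finset.sum_add_distrib]
      _ = 2 * ∑ i ∈ s, ∑ j ∈ s, (if i < j then F i j else 0) := by
          rw [hgt, hdg]; ring
  have hS1 : ∑ i ∈ s, ∑ j ∈ s, (if i < j then F i j else 0) = -‖D‖ ^ 2 := by
    have := hT; rw [htri] at this; linarith
  -- pointwise decomposition of the main summand
  have hpoint : ∀ i ∈ s, ∀ j ∈ s,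
      (if i < j ∧ 1 < j - i ∧ j - i < 2 * n - 1 then
          (-1 : ℝ) ^ (j - i) * dist (A i) (A j) ^ 2 else 0)
      = (if i < j then F i j else 0) - (if j = i + 1 then F i j else 0)
        - (if j = 2 * n then (if i = 1 then F i j else 0) else 0) := by
    intro i hi j hj
    simp only [hs, Finset.mem_Icc] at hi hj
    have hpow : i < j → (-1 : ℝ) ^ (j - i) = (-1 : ℝ) ^ (i + j) := by
      intro h
      have hij : i + j = (j - i) + 2 * i := by omega
      rw [hij, pow_add, pow_mul]
      norm_num
    simp only [hF]
    have hstep : (if i < j ∧ 1 < j - i ∧ j - i < 2 * n - 1 then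
          (-1 : ℝ) ^ (j - i) * dist (A i) (A j) ^ 2 else 0)
        = (if i < j ∧ 1 < j - i ∧ j - i < 2 * n - 1 then
          (-1 : ℝ) ^ (i + j) * dist (A i) (A j) ^ 2 else 0) := by
      split_ifs with h
      · rw [hpow h.1]
      · rfl
    rw [hstep]
    split_ifs <;> first | (exfalso; omega) | ring
  -- compute S2
  have hS2 : ∑ i ∈ s, ∑ j ∈ s, (if j = i + 1 then F i j else 0)
      = -∑ i ∈ Finset.Icc 1 (2 * n - 1), dist (A i) (A (i + 1)) ^ 2 := by
    have h1 : ∀ i ∈ s, ∑ j ∈ s, (if j = i + 1 then F i j else 0)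
        = if i + 1 ∈ s then F i (i + 1) else 0 := fun i _ =>
      Finset.sum_ite_eq' s (i + 1) (F i)
    rw [Finset.sum_congr rfl h1, ← Finset.sum_filter]
    have hset : s.filter (fun i => i + 1 ∈ s) = Finset.Icc 1 (2 * n - 1) := by
      ext x
      simp only [hs, Finset.mem_filter, Finset.mem_Icc]
      omega
    rw [hset, ← Finset.sum_neg_distrib]
    refine Finset.sum_congr rfl fun i _ => ?_
    simp only [hF]
    have : (-1 : ℝ) ^ (i + (i + 1)) = -1 := Odd.neg_one_pow ⟨i, by ring⟩
    rw [this]; ring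
  -- compute S3
  have h2n : 2 * n ∈ s := by simp [hs]; omega
  have h1s : 1 ∈ s := by simp [hs]; omega
  have hS3 : ∑ i ∈ s, ∑ j ∈ s, (if j = 2 * n then (if i = 1 then F i j else 0) else 0)
      = -dist (A 1) (A (2 * n)) ^ 2 := by
    have h1 : ∀ i ∈ s, ∑ j ∈ s, (if j = 2 * n then (if i = 1 then F i j else 0) else 0)
        = if i = 1 then F i (2 * n) else 0 := by
      intro i _
      rw [Finset.sum_ite_eq' s (2 * n) (fun j => if i = 1 then F i j else 0), if_pos h2n]
    rw [Finset.sum_congr rfl h1, Finset.sum_ite_eq' s 1 (fun i => F i (2 * n)), if_pos h1s]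
    simp only [hF]
    have : (-1 : ℝ) ^ (1 + 2 * n) = -1 := Odd.neg_one_pow ⟨n, by ring⟩
    rw [this]; ring
  -- LHS split
  have hLHS : ∑ i ∈ s, dist (A i) (A (i + 1)) ^ 2
      = (∑ i ∈ Finset.Icc 1 (2 * n - 1), dist (A i) (A (i + 1)) ^ 2)
        + dist (A 1) (A (2 * n)) ^ 2 := by
    have h2n1 : 2 * n = (2 * n - 1) + 1 := by omega
    rw [hs, h2n1, Finset.sum_Icc_succ_top (by omega)]
    congr 1
    rw [← h2n1]
    rw [hcyc, dist_comm]
  -- RHS sum value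
  have hRHS : ∑ i ∈ s, ∑ j ∈ s,
      (if i < j ∧ 1 < j - i ∧ j - i < 2 * n - 1 then
          (-1 : ℝ) ^ (j - i) * dist (A i) (A j) ^ 2 else 0)
      = -‖D‖ ^ 2 + ∑ i ∈ s, dist (A i) (A (i + 1)) ^ 2 := by
    rw [Finset.sum_congr rfl fun i hi => Finset.sum_congr rfl fun j hj => hpoint i hi j hj]
    simp only [Finset.sum_sub_distrib]
    rw [hS1, hS2, hS3, hLHS]
    ring
  rw [hRHS]
  have hD0 : D = (∑ k ∈ Finset.range n, A (2 * k + 2))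
      - ∑ k ∈ Finset.range n, A (2 * k + 1) := sum_neg_one_smul_Icc' A n
  constructor
  · intro h
    have hnorm : ‖D‖ ^ 2 = 0 := by linarith
    have : D = 0 := by
      have := pow_eq_zero_iff (n := 2) (by norm_num) |>.mp hnorm
      exact norm_eq_zero.mp this
    rw [hD0, sub_eq_zero] at this
    rw [this]
  · intro h
    have hne : (n : ℝ)⁻¹ ≠ 0 := by
      apply inv_ne_zero
      exact_mod_cast (by omega : n ≠ 0)
    have heq : ∑ k ∈ Finset.range n, A (2 * k + 1)
        = ∑ k ∈ Finset.range n, A (2 * k + 2) :=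
      smul_right_injective _ hne h
    have : D = 0 := by rw [hD0, heq, sub_self]
    rw [this]
    simp
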